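/- Let K be a finite set with irreducible rates k and stationary ρ > 0. Write μ = ρ(1 + εh) with ∑_x ρ(x)h(x) = 0. Then the potential V_μ making μ stationary for the tilted rates k_V(x,y) = k(x,y)e^{(V(y)−V(x))/2} satisfies V_μ = εv + O(ε²) where v solves the linear equation L_s v = L* h, and this equation has a solution unique up to an additive constant. -/

import Mathlib

open Finset

/-- The backward generator `Lf(x) = ∑_y k(x,y)[f(y)-f(x)]`. -/
noncomputable def gen {K : Type*} [Fintype K] (k : K → K → ℝ) (f : K → ℝ) (x : K) : ℝ :=
  ∑ y, k x y * (f y - f x)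

/-- The ρ-adjoint generator `L*f(x) = ∑_y (ρ(y)k(y,x)/ρ(x))[f(y)-f(x)]`. -/
noncomputable def genStar {K : Type*} [Fintype K] (k : K → K → ℝ) (ρ : K → ℝ) (f : K → ℝ)
    (x : K) : ℝ :=
  ∑ y, (ρ y * k y x / ρ x) * (f y - f x)

section ker
variable {K : Type*} [Fintype K] (k : K → K → ℝ) (ρ : K → ℝ)

lemma sym_eq (f : K → ℝ) (x : K) :
    gen k f x + genStar k ρ f x = ∑ y, (k x y + ρ y * k y x / ρ x) * (f y - f x) := by
  rw [gen, genStar, ← Finset.sum_add_distrib]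
  congr 1; ext y; ring

lemma max_step (hk : ∀ x y, 0 ≤ k x y) (hρpos : ∀ x, 0 < ρ x) (w : K → ℝ)
    {z : K} (hz : ∀ a, w a ≤ w z) (hw : gen k w z + genStar k ρ w z = 0)
    {y : K} (hky : 0 < k z y) : w y = w z := by
  rw [sym_eq] at hw
  have hterm : ∀ a ∈ Finset.univ, (k z a + ρ a * k a z / ρ z) * (w a - w z) ≤ 0 := by
    intro a _
    apply mul_nonpos_of_nonneg_of_nonpos
    · have h1 := hk z a
      have h2 : 0 ≤ ρ a * k a z / ρ z :=
        div_nonneg (mul_nonneg (hρpos a).le (hk a z)) (hρpos z).le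
      linarith
    · linarith [hz a]
  have hy0 := (Finset.sum_eq_zero_iff_of_nonpos hterm).mp hw y (Finset.mem_univ y)
  have hcoef : 0 < k z y + ρ y * k y z / ρ z := by
    have : 0 ≤ ρ y * k y z / ρ z :=
      div_nonneg (mul_nonneg (hρpos y).le (hk y z)) (hρpos z).le
    linarith
  have : w y - w z = 0 := by
    rcases mul_eq_zero.mp hy0 with h | h
    · exact absurd h (ne_of_gt hcoef)
    · exact h
  linarith

lemma ker_const [Nonempty K] (hk : ∀ x y, 0 ≤ k x y)
    (hirr : ∀ x y : K, x ≠ y → Relation.TransGen (fun a b => 0 < k a b) x y)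
    (hρpos : ∀ x, 0 < ρ x) (w : K → ℝ)
    (hw : ∀ x, gen k w x + genStar k ρ w x = 0) : ∀ x y, w x = w y := by
  obtain ⟨z, hz⟩ := Finite.exists_max w
  have key : ∀ y, Relation.TransGen (fun a b => 0 < k a b) z y →
      w y = w z ∧ ∀ a, w a ≤ w y := by
    intro y hpath
    induction hpath with
    | single hstep =>
      have := max_step k ρ hk hρpos w hz (hw z) hstep
      exact ⟨this, fun a => this ▸ hz a⟩
    | tail _ hstep ih =>
      obtain ⟨hb, hbmax⟩ := ih
      have := max_step k ρ hk hρpos w hbmax (hw _) hstep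
      exact ⟨by rw [this, hb], fun a => this ▸ hbmax a⟩
  have hall : ∀ y, w y = w z := by
    intro y
    by_cases hyz : y = z
    · rw [hyz]
    · exact (key y (hirr z y (Ne.symm hyz))).1
  intro x y; rw [hall x, hall y]
end ker

section sums
variable {K : Type*} [Fintype K] (k : K → K → ℝ) (ρ : K → ℝ)

lemma rho_mul_genStar (hρpos : ∀ x, 0 < ρ x) (u : K → ℝ) (x : K) :
    ρ x * genStar k ρ u x = ∑ y, ρ y * k y x * (u y - u x) := by
  rw [genStar, Finset.mul_sum]
  refine Finset.sum_congr rfl fun y _ => ?_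
  have hx := (hρpos x).ne'
  field_simp

lemma sum_rho_sym (hρpos : ∀ x, 0 < ρ x) (u : K → ℝ) :
    ∑ x, ρ x * (gen k u x + genStar k ρ u x) = 0 := by
  have e2 : ∀ x, ρ x * gen k u x = ∑ y, ρ x * k x y * (u y - u x) := by
    intro x; rw [gen, Finset.mul_sum]
    exact Finset.sum_congr rfl fun y _ => by ring
  simp only [mul_add, Finset.sum_add_distrib, rho_mul_genStar k ρ hρpos, e2]
  rw [Finset.sum_comm (f := fun x y => ρ y * k y x * (u y - u x))]
  rw [← Finset.sum_add_distrib]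
  apply Finset.sum_eq_zero; intro x _
  rw [← Finset.sum_add_distrib]
  apply Finset.sum_eq_zero; intro y _
  ring

lemma sum_rho_genStar (hρpos : ∀ x, 0 < ρ x)
    (hstat : ∀ x, ∑ y, (ρ x * k x y - ρ y * k y x) = 0)
    (h : K → ℝ) : ∑ x, ρ x * genStar k ρ h x = 0 := by
  have hst : ∀ x, ∑ y, ρ y * k y x = ρ x * ∑ y, k x y := by
    intro x
    have h0 := hstat x
    rw [Finset.sum_sub_distrib] at h0
    rw [Finset.mul_sum]
    have : ∑ y, ρ x * k x y = ∑ y, ρ x * k x y := rfl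
    linarith [h0]
  simp only [rho_mul_genStar k ρ hρpos]
  have e : ∀ x, ∑ y, ρ y * k y x * (h y - h x)
      = (∑ y, ρ y * k y x * h y) - h x * (ρ x * ∑ y, k x y) := by
    intro x
    rw [← hst x, Finset.mul_sum, ← Finset.sum_sub_distrib]
    exact Finset.sum_congr rfl fun y _ => by ring
  simp only [e]
  rw [Finset.sum_sub_distrib]
  rw [Finset.sum_comm (f := fun x y => ρ y * k y x * h y)]
  apply sub_eq_zero_of_eq
  refine Finset.sum_congr rfl fun y _ => ?_
  rw [Finset.mul_sum, Finset.mul_sum]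
  exact Finset.sum_congr rfl fun x _ => by ring
end sums

section linalg
variable {K : Type*} [Fintype K] (k : K → K → ℝ) (ρ : K → ℝ)

lemma gen_add (u v : K → ℝ) (x : K) : gen k (u + v) x = gen k u x + gen k v x := by
  rw [gen, gen, gen, ← Finset.sum_add_distrib]
  exact Finset.sum_congr rfl fun y _ => by simp; ring

lemma gen_smul (c : ℝ) (u : K → ℝ) (x : K) : gen k (c • u) x = c * gen k u x := by
  rw [gen, gen, Finset.mul_sum]
  exact Finset.sum_congr rfl fun y _ => by simp; ring

lemma genStar_add (u v : K → ℝ) (x : K) :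
    genStar k ρ (u + v) x = genStar k ρ u x + genStar k ρ v x := by
  rw [genStar, genStar, genStar, ← Finset.sum_add_distrib]
  exact Finset.sum_congr rfl fun y _ => by simp; ring

lemma genStar_smul (c : ℝ) (u : K → ℝ) (x : K) :
    genStar k ρ (c • u) x = c * genStar k ρ u x := by
  rw [genStar, genStar, Finset.mul_sum]
  exact Finset.sum_congr rfl fun y _ => by simp; ring

noncomputable def symOp : (K → ℝ) →ₗ[ℝ] (K → ℝ) where
  toFun u := fun x => gen k u x + genStar k ρ u x + 2 * (∑ z, u z)
  map_add' u v := by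
    funext x
    simp only [gen_add, genStar_add, Pi.add_apply, Finset.sum_add_distrib]
    ring
  map_smul' c u := by
    funext x
    simp only [gen_smul, genStar_smul, Pi.smul_apply, smul_eq_mul, ← Finset.mul_sum,
      RingHom.id_apply]
    ring

lemma zero_of_sym_eq [Nonempty K] (hk : ∀ x y, 0 ≤ k x y)
    (hirr : ∀ x y : K, x ≠ y → Relation.TransGen (fun a b => 0 < k a b) x y)
    (hρpos : ∀ x, 0 < ρ x) (hρsum : ∑ x, ρ x = 1) (u : K → ℝ)
    (hu : ∀ x, gen k u x + genStar k ρ u x + 2 * (∑ z, u z) = 0) : u = 0 := by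
  have hsum0 : ∑ z, u z = 0 := by
    have h1 : ∑ x, ρ x * (gen k u x + genStar k ρ u x + 2 * (∑ z, u z)) = 0 := by
      simp only [hu, mul_zero, Finset.sum_const_zero]
    have h2 : ∑ x, ρ x * (gen k u x + genStar k ρ u x + 2 * (∑ z, u z))
        = (∑ x, ρ x * (gen k u x + genStar k ρ u x)) + 2 * (∑ z, u z) * ∑ x, ρ x := by
      have e : ∀ x : K, ρ x * (gen k u x + genStar k ρ u x + 2 * (∑ z, u z))
          = ρ x * (gen k u x + genStar k ρ u x) + 2 * (∑ z, u z) * ρ x :=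
        fun x => by ring
      simp only [e]
      rw [Finset.sum_add_distrib, ← Finset.mul_sum]
    rw [h2, sum_rho_sym k ρ hρpos, hρsum] at h1
    linarith
  have hker : ∀ x, gen k u x + genStar k ρ u x = 0 := by
    intro x
    have := hu x
    rw [hsum0] at this
    linarith
  have hconst := ker_const k ρ hk hirr hρpos u hker
  funext x
  have : ∑ z, u z = (Fintype.card K : ℝ) * u x := by
    rw [Finset.sum_congr rfl fun z _ => hconst z x]
    simp [Finset.card_univ, mul_comm]
  have hcard : (0:ℝ) < Fintype.card K := by
    exact_mod_cast Fintype.card_pos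
  have : (Fintype.card K : ℝ) * u x = 0 := by rw [← this, hsum0]
  have := mul_eq_zero.mp this
  simp only [Pi.zero_apply]
  rcases this with h | h
  · exact absurd h (ne_of_gt hcard)
  · exact h

lemma exists_solution [Nonempty K] (hk : ∀ x y, 0 ≤ k x y)
    (hirr : ∀ x y : K, x ≠ y → Relation.TransGen (fun a b => 0 < k a b) x y)
    (hρpos : ∀ x, 0 < ρ x) (hρsum : ∑ x, ρ x = 1)
    (hstat : ∀ x, ∑ y, (ρ x * k x y - ρ y * k y x) = 0) (h : K → ℝ) :
    ∃ v : K → ℝ, (∀ x, (gen k v x + genStar k ρ v x) / 2 = genStar k ρ h x)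
      ∧ ∑ z, v z = 0 := by
  have hinj : Function.Injective (symOp k ρ) := by
    rw [← LinearMap.ker_eq_bot, LinearMap.ker_eq_bot']
    intro u hu
    exact zero_of_sym_eq k ρ hk hirr hρpos hρsum u (fun x => congrFun hu x)
  have hsurj : Function.Surjective (symOp k ρ) :=
    (LinearMap.injective_iff_surjective).mp hinj
  obtain ⟨v, hv⟩ := hsurj (fun x => 2 * genStar k ρ h x)
  have hv' : ∀ x, gen k v x + genStar k ρ v x + 2 * (∑ z, v z) = 2 * genStar k ρ h x :=
    fun x => congrFun hv x
  have hsum0 : ∑ z, v z = 0 := by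
    have h1 : ∑ x, ρ x * (gen k v x + genStar k ρ v x + 2 * (∑ z, v z))
        = ∑ x, ρ x * (2 * genStar k ρ h x) := by
      exact Finset.sum_congr rfl fun x _ => by rw [hv' x]
    have h2 : ∑ x, ρ x * (gen k v x + genStar k ρ v x + 2 * (∑ z, v z))
        = (∑ x, ρ x * (gen k v x + genStar k ρ v x)) + 2 * (∑ z, v z) * ∑ x, ρ x := by
      have e : ∀ x : K, ρ x * (gen k v x + genStar k ρ v x + 2 * (∑ z, v z))
          = ρ x * (gen k v x + genStar k ρ v x) + 2 * (∑ z, v z) * ρ x :=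
        fun x => by ring
      simp only [e]
      rw [Finset.sum_add_distrib, ← Finset.mul_sum]
    have h3 : ∑ x, ρ x * (2 * genStar k ρ h x) = 2 * ∑ x, ρ x * genStar k ρ h x := by
      rw [Finset.mul_sum]; exact Finset.sum_congr rfl fun x _ => by ring
    rw [h2, sum_rho_sym k ρ hρpos, hρsum] at h1
    rw [h3, sum_rho_genStar k ρ hρpos hstat] at h1
    linarith
  refine ⟨v, fun x => ?_, hsum0⟩
  have := hv' x
  rw [hsum0] at this
  linarith

lemma uniqueness [Nonempty K] (hk : ∀ x y, 0 ≤ k x y)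
    (hirr : ∀ x y : K, x ≠ y → Relation.TransGen (fun a b => 0 < k a b) x y)
    (hρpos : ∀ x, 0 < ρ x) (h : K → ℝ) (v₁ v₂ : K → ℝ)
    (h1 : ∀ x, (gen k v₁ x + genStar k ρ v₁ x) / 2 = genStar k ρ h x)
    (h2 : ∀ x, (gen k v₂ x + genStar k ρ v₂ x) / 2 = genStar k ρ h x) :
    ∃ c : ℝ, ∀ x, v₁ x = v₂ x + c := by
  have hker : ∀ x, gen k (v₁ + (-1 : ℝ) • v₂) x + genStar k ρ (v₁ + (-1 : ℝ) • v₂) x = 0 := by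
    intro x
    rw [gen_add, genStar_add, gen_smul, genStar_smul]
    have := h1 x; have := h2 x
    linarith
  have hconst := ker_const k ρ hk hirr hρpos _ hker
  obtain ⟨x₀⟩ := ‹Nonempty K›
  refine ⟨v₁ x₀ - v₂ x₀, fun x => ?_⟩
  have := hconst x x₀
  simp only [Pi.add_apply, Pi.smul_apply, smul_eq_mul] at this
  linarith
end linalg

section analytic

variable {K : Type*} [Fintype K]

noncomputable def Phi (k : K → K → ℝ) (ρ h : K → ℝ) (p : ℝ × (K → ℝ)) : ℝ × (K → ℝ) :=
  (p.1, fun x => (∑ y, (k x y * Real.exp ((p.2 y - p.2 x) / 2) * (ρ x * (1 + p.1 * h x))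
      - k y x * Real.exp ((p.2 x - p.2 y) / 2) * (ρ y * (1 + p.1 * h y))))
    + (∑ z, p.2 z) * ρ x)

lemma contDiff_Phi (k : K → K → ℝ) (ρ h : K → ℝ) : ContDiff ℝ 2 (Phi k ρ h) := by
  unfold Phi
  apply ContDiff.prodMk
  · fun_prop
  · apply contDiff_pi.mpr
    intro x
    apply ContDiff.add
    · apply ContDiff.sum
      intro y _
      apply ContDiff.sub <;>
      · apply ContDiff.mul
        · apply ContDiff.mul
          · fun_prop
          · apply ContDiff.exp
            apply ContDiff.div_const
            fun_prop
        · fun_prop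
    · apply ContDiff.mul
      · apply ContDiff.sum
        intro z _
        fun_prop
      · fun_prop

noncomputable def Draw (k : K → K → ℝ) (ρ h : K → ℝ) (e : ℝ) (u : K → ℝ) (x : K) : ℝ :=
  ∑ y, (k x y * ((u y - u x) / 2) * ρ x + k x y * (ρ x * (e * h x))
      - (k y x * ((u x - u y) / 2) * ρ y + k y x * (ρ y * (e * h y))))
    + (∑ z, u z) * ρ x

lemma hasDerivAt_coord (k : K → K → ℝ) (ρ h : K → ℝ) (e : ℝ) (u : K → ℝ) (x : K) :
    HasDerivAt (fun t : ℝ => (Phi k ρ h (t * e, t • u)).2 x) (Draw k ρ h e u x) 0 := by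
  have hfun : (fun t : ℝ => (Phi k ρ h (t * e, t • u)).2 x)
      = fun t => (∑ y, (k x y * Real.exp ((t * u y - t * u x) / 2) * (ρ x * (1 + t * e * h x))
        - k y x * Real.exp ((t * u x - t * u y) / 2) * (ρ y * (1 + t * e * h y))))
        + (∑ z, t * u z) * ρ x := by
    funext t
    simp [Phi]
  rw [hfun, Draw]
  apply HasDerivAt.add
  · apply HasDerivAt.fun_sum
    intro y _
    have h1 : HasDerivAt (fun t : ℝ => (t * u y - t * u x) / 2) ((u y - u x) / 2) 0 :=
      ((hasDerivAt_mul_const (u y)).sub (hasDerivAt_mul_const (u x))).div_const 2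
    have h1' : HasDerivAt (fun t : ℝ => (t * u x - t * u y) / 2) ((u x - u y) / 2) 0 :=
      ((hasDerivAt_mul_const (u x)).sub (hasDerivAt_mul_const (u y))).div_const 2
    have h2 : HasDerivAt (fun t : ℝ => Real.exp ((t * u y - t * u x) / 2)) ((u y - u x) / 2) 0 := by
      simpa using h1.exp
    have h2' : HasDerivAt (fun t : ℝ => Real.exp ((t * u x - t * u y) / 2)) ((u x - u y) / 2) 0 := by
      simpa using h1'.exp
    have h4 : HasDerivAt (fun t : ℝ => ρ x * (1 + t * e * h x)) (ρ x * (e * h x)) 0 := by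
      simpa using (((hasDerivAt_mul_const e).mul_const (h x)).const_add 1).const_mul (ρ x)
    have h4' : HasDerivAt (fun t : ℝ => ρ y * (1 + t * e * h y)) (ρ y * (e * h y)) 0 := by
      simpa using (((hasDerivAt_mul_const e).mul_const (h y)).const_add 1).const_mul (ρ y)
    have hA := (h2.const_mul (k x y)).fun_mul h4
    have hB := (h2'.const_mul (k y x)).fun_mul h4'
    have := hA.fun_sub hB
    simpa using this
  · have hsum : HasDerivAt (fun t : ℝ => ∑ z, t * u z) (∑ z, u z) 0 :=
      HasDerivAt.fun_sum (fun z _ => hasDerivAt_mul_const (u z))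
    exact hsum.mul_const (ρ x)

lemma hasDerivAt_line (k : K → K → ℝ) (ρ h : K → ℝ) (e : ℝ) (u : K → ℝ) :
    HasDerivAt (fun t : ℝ => Phi k ρ h (t * e, t • u))
      ((e, fun x => Draw k ρ h e u x) : ℝ × (K → ℝ)) 0 := by
  have hfun : (fun t : ℝ => Phi k ρ h (t * e, t • u))
      = fun t => ((t * e, fun x => (Phi k ρ h (t * e, t • u)).2 x) : ℝ × (K → ℝ)) := rfl
  rw [hfun]
  exact (hasDerivAt_mul_const e).prodMk
    (hasDerivAt_pi.mpr fun x => hasDerivAt_coord k ρ h e u x)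

lemma hasDerivAt_smul_vec (u : K → ℝ) :
    HasDerivAt (fun t : ℝ => t • u) u 0 := by
  simpa using (hasDerivAt_id (0:ℝ)).smul_const u

lemma fderiv_Phi_apply (k : K → K → ℝ) (ρ h : K → ℝ) (e : ℝ) (u : K → ℝ) :
    fderiv ℝ (Phi k ρ h) ((0 : ℝ), (0 : K → ℝ)) (e, u)
      = ((e, fun x => Draw k ρ h e u x) : ℝ × (K → ℝ)) := by
  have hdiff : DifferentiableAt ℝ (Phi k ρ h) ((0 : ℝ), (0 : K → ℝ)) :=
    ((contDiff_Phi k ρ h).differentiable (by norm_num)).differentiableAt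
  have hc : HasDerivAt (fun t : ℝ => ((t * e, t • u) : ℝ × (K → ℝ))) ((e, u) : ℝ × (K → ℝ)) 0 :=
    (hasDerivAt_mul_const e).prodMk (hasDerivAt_smul_vec u)
  have hΦ : HasFDerivAt (Phi k ρ h) (fderiv ℝ (Phi k ρ h) ((0 : ℝ), (0 : K → ℝ)))
      ((fun t : ℝ => ((t * e, t • u) : ℝ × (K → ℝ))) 0) := by
    simpa using hdiff.hasFDerivAt
  have hcomp := hΦ.comp_hasDerivAt 0 hc
  exact ((hasDerivAt_line k ρ h e u).unique hcomp).symm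

end analytic

section draweq
variable {K : Type*} [Fintype K] (k : K → K → ℝ) (ρ h : K → ℝ)

lemma stat_sum (hstat : ∀ x, ∑ y, (ρ x * k x y - ρ y * k y x) = 0) (x : K) :
    ∑ y, ρ y * k y x = ρ x * ∑ y, k x y := by
  have h0 := hstat x
  rw [Finset.sum_sub_distrib] at h0
  rw [Finset.mul_sum]
  linarith

lemma Draw_eq (hρpos : ∀ x, 0 < ρ x)
    (hstat : ∀ x, ∑ y, (ρ x * k x y - ρ y * k y x) = 0) (e : ℝ) (u : K → ℝ) (x : K) :
    Draw k ρ h e u x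
      = ρ x * ((gen k u x + genStar k ρ u x) / 2 + (∑ z, u z) - e * genStar k ρ h x) := by
  rw [Draw]
  have hsplit : ∀ y : K, k x y * ((u y - u x) / 2) * ρ x + k x y * (ρ x * (e * h x))
      - (k y x * ((u x - u y) / 2) * ρ y + k y x * (ρ y * (e * h y)))
      = (k x y * (u y - u x) * ρ x / 2 + ρ y * k y x * (u y - u x) / 2)
        + e * h x * (ρ x * k x y) - e * (ρ y * k y x * h y) := fun y => by ring
  simp only [hsplit]
  have hA : ∑ y, k x y * (u y - u x) * ρ x / 2 = ρ x * gen k u x / 2 := by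
    rw [gen, Finset.mul_sum, Finset.sum_div]
    exact Finset.sum_congr rfl fun y _ => by ring
  have hB : ∑ y, ρ y * k y x * (u y - u x) / 2 = ρ x * genStar k ρ u x / 2 := by
    rw [rho_mul_genStar k ρ hρpos, Finset.sum_div]
  have hC : ∑ y, e * h x * (ρ x * k x y) = e * h x * (ρ x * ∑ y, k x y) := by
    rw [Finset.mul_sum, Finset.mul_sum]
  have e1 : ∑ y, ((k x y * (u y - u x) * ρ x / 2 + ρ y * k y x * (u y - u x) / 2)
        + e * h x * (ρ x * k x y) - e * (ρ y * k y x * h y))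
      = (ρ x * gen k u x / 2 + ρ x * genStar k ρ u x / 2)
        + e * h x * (ρ x * ∑ y, k x y) - e * ∑ y, ρ y * k y x * h y := by
    rw [Finset.sum_sub_distrib, Finset.sum_add_distrib, Finset.sum_add_distrib, hA, hB, hC]
    congr 1
    rw [Finset.mul_sum]
  rw [e1]
  have e2 : ρ x * genStar k ρ h x = (∑ y, ρ y * k y x * h y) - h x * (ρ x * ∑ y, k x y) := by
    rw [rho_mul_genStar k ρ hρpos]
    have hr : ∀ y : K, ρ y * k y x * (h y - h x) = ρ y * k y x * h y - h x * (ρ y * k y x) :=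
      fun y => by ring
    simp only [hr]
    rw [Finset.sum_sub_distrib, ← Finset.mul_sum, stat_sum k ρ hstat x]
  have e3 : e * ∑ y, ρ y * k y x * h y
      = e * (ρ x * genStar k ρ h x) + e * (h x * (ρ x * ∑ y, k x y)) := by
    rw [e2]; ring
  rw [e3]
  ring
end draweq

section ift
open Filter
variable {K : Type*} [Fintype K] (k : K → K → ℝ) (ρ h : K → ℝ)

lemma Phi00 (hstat : ∀ x, ∑ y, (ρ x * k x y - ρ y * k y x) = 0) :
    Phi k ρ h ((0 : ℝ), (0 : K → ℝ)) = ((0 : ℝ), (0 : K → ℝ)) := by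
  unfold Phi
  refine Prod.ext rfl ?_
  funext x
  have e : ∀ y : K, k x y * Real.exp (((0:K→ℝ) y - (0:K→ℝ) x) / 2) * (ρ x * (1 + (0:ℝ) * h x))
      - k y x * Real.exp (((0:K→ℝ) x - (0:K→ℝ) y) / 2) * (ρ y * (1 + (0:ℝ) * h y))
      = ρ x * k x y - ρ y * k y x := fun y => by simp; ring
  simp only [e, hstat x]
  simp

lemma sum_V_zero (hρsum : ∑ x, ρ x = 1) (ε : ℝ) (V : K → ℝ)
    (hz : ∀ x, (∑ y, (k x y * Real.exp ((V y - V x) / 2) * (ρ x * (1 + ε * h x))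
      - k y x * Real.exp ((V x - V y) / 2) * (ρ y * (1 + ε * h y)))) + (∑ z, V z) * ρ x = 0) :
    ∀ x, ∑ y, (k x y * Real.exp ((V y - V x) / 2) * (ρ x * (1 + ε * h x))
      - k y x * Real.exp ((V x - V y) / 2) * (ρ y * (1 + ε * h y))) = 0 := by
  set A : K → K → ℝ := fun x y => k x y * Real.exp ((V y - V x) / 2) * (ρ x * (1 + ε * h x))
    with hA
  have hflux : ∑ x, ∑ y, (A x y - A y x) = 0 := by
    simp only [Finset.sum_sub_distrib]
    rw [Finset.sum_comm (f := fun x y => A y x)]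
    exact sub_self _
  have hsum : ∑ x, ((∑ y, (A x y - A y x)) + (∑ z, V z) * ρ x) = 0 :=
    Finset.sum_eq_zero fun x _ => hz x
  rw [Finset.sum_add_distrib, hflux, zero_add, ← Finset.mul_sum, hρsum, mul_one] at hsum
  intro x
  have := hz x
  rw [hsum, zero_mul, add_zero] at this
  exact this
end ift

section core
open Filter Metric
variable {K : Type*} [Fintype K]

lemma main_core [Nonempty K] (k : K → K → ℝ) (hk : ∀ x y, 0 ≤ k x y)
    (hirr : ∀ x y : K, x ≠ y → Relation.TransGen (fun a b => 0 < k a b) x y)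
    (ρ : K → ℝ) (hρpos : ∀ x, 0 < ρ x) (hρsum : ∑ x, ρ x = 1)
    (hstat : ∀ x, ∑ y, (ρ x * k x y - ρ y * k y x) = 0) (h : K → ℝ) :
    ∃ v : K → ℝ,
      (∀ x, (gen k v x + genStar k ρ v x) / 2 = genStar k ρ h x) ∧
      ∃ C : ℝ, ∃ δ > (0 : ℝ), ∀ ε : ℝ, |ε| < δ →
        ∃ V : K → ℝ,
          (∀ x, ∑ y, (k x y * Real.exp ((V y - V x) / 2) * (ρ x * (1 + ε * h x))
              - k y x * Real.exp ((V x - V y) / 2) * (ρ y * (1 + ε * h y))) = 0) ∧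
          ∀ x, |V x - ε * v x| ≤ C * ε ^ 2 := by
  classical
  set L := fderiv ℝ (Phi k ρ h) ((0 : ℝ), (0 : K → ℝ)) with hLdef
  -- injectivity of the linearization
  have hker : ∀ p : ℝ × (K → ℝ), L p = 0 → p = 0 := by
    rintro ⟨e, u⟩ hp
    rw [hLdef, fderiv_Phi_apply] at hp
    have he : e = 0 := congrArg Prod.fst hp
    have hu2 : ∀ x, Draw k ρ h e u x = 0 := fun x => congrFun (congrArg Prod.snd hp) x
    have hu : u = 0 := by
      apply zero_of_sym_eq k ρ hk hirr hρpos hρsum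
      intro x
      have := hu2 x
      rw [Draw_eq k ρ h hρpos hstat, he] at this
      have h0 : (gen k u x + genStar k ρ u x) / 2 + (∑ z, u z) - 0 * genStar k ρ h x = 0 :=
        (mul_eq_zero.mp this).resolve_left (hρpos x).ne'
      rw [zero_mul, sub_zero] at h0
      linarith
    rw [he, hu]; rfl
  have hinj : Function.Injective L := by
    intro p q hpq
    have : L (p - q) = 0 := by rw [map_sub, hpq, sub_self]
    have := hker _ this
    exact sub_eq_zero.mp this
  have hsurj : Function.Surjective L := by
    have := LinearMap.injective_iff_surjective
      (f := (L : (ℝ × (K → ℝ)) →ₗ[ℝ] (ℝ × (K → ℝ)))) |>.mp hinj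
    exact this
  let eL : (ℝ × (K → ℝ)) ≃L[ℝ] (ℝ × (K → ℝ)) :=
    LinearEquiv.toContinuousLinearEquiv
      (LinearEquiv.ofBijective (L : (ℝ × (K → ℝ)) →ₗ[ℝ] (ℝ × (K → ℝ))) ⟨hinj, hsurj⟩)
  have hcoe : (eL : (ℝ × (K → ℝ)) →L[ℝ] (ℝ × (K → ℝ))) = L :=
    ContinuousLinearMap.ext fun p => rfl
  have hΦca : ContDiffAt ℝ 2 (Phi k ρ h) ((0 : ℝ), (0 : K → ℝ)) := (contDiff_Phi k ρ h).contDiffAt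
  have hΦdiffAt : DifferentiableAt ℝ (Phi k ρ h) ((0 : ℝ), (0 : K → ℝ)) :=
    ((contDiff_Phi k ρ h).differentiable two_ne_zero).differentiableAt
  have hf' : HasFDerivAt (Phi k ρ h) ((eL : (ℝ × (K → ℝ)) →L[ℝ] (ℝ × (K → ℝ))))
      ((0 : ℝ), (0 : K → ℝ)) := by
    rw [hcoe]
    exact hΦdiffAt.hasFDerivAt
  have hn : (2 : WithTop ℕ∞) ≠ 0 := two_ne_zero
  have hstrict := hΦca.hasStrictFDerivAt' hf' hn
  set ψ := hstrict.localInverse (Phi k ρ h) eL ((0 : ℝ), (0 : K → ℝ)) with hψdef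
  have hψca : ContDiffAt ℝ 2 ψ ((0 : ℝ), (0 : K → ℝ)) := by
    have := hΦca.to_localInverse hf' hn
    rw [Phi00 k ρ h hstat] at this
    exact this
  have hψ0 : ψ ((0 : ℝ), (0 : K → ℝ)) = ((0 : ℝ), (0 : K → ℝ)) := by
    have := hstrict.localInverse_apply_image
    rwa [Phi00 k ρ h hstat] at this
  have hev : ∀ᶠ q in nhds (((0 : ℝ), (0 : K → ℝ)) : ℝ × (K → ℝ)), Phi k ρ h (ψ q) = q := by
    have := hstrict.eventually_right_inverse
    rwa [Phi00 k ρ h hstat] at this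
  have htend : Tendsto (fun ε : ℝ => ((ε, 0) : ℝ × (K → ℝ))) (nhds 0)
      (nhds (((0 : ℝ), (0 : K → ℝ)) : ℝ × (K → ℝ))) := by
    have hc : Continuous (fun ε : ℝ => ((ε, 0) : ℝ × (K → ℝ))) :=
      continuous_id.prodMk continuous_const
    simpa using hc.tendsto 0
  set θ : ℝ → ℝ × (K → ℝ) := fun ε => ψ (ε, 0) with hθdef
  set φ : ℝ → K → ℝ := fun ε => (θ ε).2 with hφdef
  have hpair : ContDiff ℝ 2 (fun ε : ℝ => ((ε, 0) : ℝ × (K → ℝ))) :=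
    contDiff_id.prodMk contDiff_const
  have hθca : ContDiffAt ℝ 2 θ 0 := by
    apply ContDiffAt.comp (g := ψ) 0 (by simpa using hψca) hpair.contDiffAt
  have hφca : ContDiffAt ℝ 2 φ 0 := contDiff_snd.contDiffAt.comp 0 hθca
  have hθ0 : θ 0 = ((0 : ℝ), (0 : K → ℝ)) := hψ0
  have hφ0 : φ 0 = 0 := by
    show (θ 0).2 = 0
    rw [hθ0]
  have hevε : ∀ᶠ ε in nhds (0 : ℝ), Phi k ρ h (θ ε) = (ε, 0) := htend.eventually hev
  have hfst : ∀ᶠ ε in nhds (0 : ℝ), (θ ε).1 = ε :=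
    hevε.mono fun ε hε => congrArg Prod.fst hε
  set v := deriv φ 0 with hvdef
  have hφd : HasDerivAt φ v 0 := (hφca.differentiableAt two_ne_zero).hasDerivAt
  have hθeq : θ =ᶠ[nhds (0 : ℝ)] fun ε => ((ε, φ ε) : ℝ × (K → ℝ)) :=
    hfst.mono fun ε hε => Prod.ext hε rfl
  have hθd : HasDerivAt θ (((1 : ℝ), v) : ℝ × (K → ℝ)) 0 :=
    (((hasDerivAt_id 0).prodMk hφd)).congr_of_eventuallyEq hθeq
  have hΦfd : HasFDerivAt (Phi k ρ h) L (θ 0) := by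
    rw [hθ0]
    exact hΦdiffAt.hasFDerivAt
  have hcompd : HasDerivAt (fun ε => Phi k ρ h (θ ε)) (L ((1 : ℝ), v)) 0 :=
    hΦfd.comp_hasDerivAt 0 hθd
  have hlin : HasDerivAt (fun ε : ℝ => ((ε, 0) : ℝ × (K → ℝ)))
      (((1 : ℝ), (0 : K → ℝ)) : ℝ × (K → ℝ)) 0 :=
    (hasDerivAt_id 0).prodMk (hasDerivAt_const 0 0)
  have hcompd' : HasDerivAt (fun ε => Phi k ρ h (θ ε)) (((1 : ℝ), (0 : K → ℝ)) : ℝ × (K → ℝ)) 0 :=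
    hlin.congr_of_eventuallyEq hevε
  have hL1v : L (((1 : ℝ), v) : ℝ × (K → ℝ)) = (((1 : ℝ), (0 : K → ℝ)) : ℝ × (K → ℝ)) :=
    hcompd.unique hcompd'
  rw [hLdef, fderiv_Phi_apply] at hL1v
  have hDraw : ∀ x, Draw k ρ h 1 v x = 0 := fun x => congrFun (congrArg Prod.snd hL1v) x
  have heq1 : ∀ x, (gen k v x + genStar k ρ v x) / 2 + (∑ z, v z) - genStar k ρ h x = 0 := by
    intro x
    have := hDraw x
    rw [Draw_eq k ρ h hρpos hstat] at this
    have h0 := (mul_eq_zero.mp this).resolve_left (hρpos x).ne'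
    rw [one_mul] at h0
    exact h0
  have hsv : ∑ z, v z = 0 := by
    have h1 : ∑ x, ρ x * ((gen k v x + genStar k ρ v x) / 2 + (∑ z, v z) - genStar k ρ h x)
        = 0 := Finset.sum_eq_zero fun x _ => by rw [heq1 x, mul_zero]
    have hterm : ∀ x, ρ x * ((gen k v x + genStar k ρ v x) / 2 + (∑ z, v z) - genStar k ρ h x)
        = ρ x * (gen k v x + genStar k ρ v x) / 2 + (∑ z, v z) * ρ x
          - ρ x * genStar k ρ h x := fun x => by ring
    rw [Finset.sum_congr rfl fun x _ => hterm x] at h1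
    rw [Finset.sum_sub_distrib, Finset.sum_add_distrib, ← Finset.sum_div, ← Finset.mul_sum,
      sum_rho_sym k ρ hρpos v, sum_rho_genStar k ρ hρpos hstat h, hρsum] at h1
    simpa using h1
  have part1 : ∀ x, (gen k v x + genStar k ρ v x) / 2 = genStar k ρ h x := by
    intro x
    have := heq1 x
    rw [hsv] at this
    linarith
  refine ⟨v, part1, ?_⟩
  have hderiv_eq : deriv φ = fun t => fderiv ℝ φ t 1 := by
    funext t; rfl
  have hf1 : ContDiffAt ℝ 1 (fderiv ℝ φ) 0 := hφca.fderiv_right (by norm_num)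
  have hdca : ContDiffAt ℝ 1 (deriv φ) 0 := by
    rw [hderiv_eq]
    exact hf1.clm_apply contDiffAt_const
  have hstr2 : HasStrictFDerivAt (deriv φ) (fderiv ℝ (deriv φ) 0) 0 :=
    hdca.hasStrictFDerivAt one_ne_zero
  obtain ⟨M, t, htmem, hlip⟩ := hstr2.exists_lipschitzOnWith
  obtain ⟨s0, hs0mem, hs0⟩ := hφca.contDiffOn (by norm_num : (1 : WithTop ℕ∞) ≤ 2) (by simp)
  obtain ⟨sE, hsEmem, hsE⟩ := Filter.eventually_iff_exists_mem.mp hevε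
  have hU : t ∩ (interior s0 ∩ sE) ∈ nhds (0 : ℝ) :=
    Filter.inter_mem htmem (Filter.inter_mem (interior_mem_nhds.mpr hs0mem) hsEmem)
  obtain ⟨δ, hδpos, hδsub⟩ := Metric.mem_nhds_iff.mp hU
  have h0t : (0 : ℝ) ∈ t := mem_of_mem_nhds htmem
  refine ⟨(M : ℝ), δ, hδpos, ?_⟩
  intro ε hε
  have hεball : ∀ s : ℝ, |s| ≤ |ε| → s ∈ t ∩ (interior s0 ∩ sE) := by
    intro s hs
    apply hδsub
    rw [Metric.mem_ball, Real.dist_eq, sub_zero]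
    linarith
  have hεmem := hεball ε le_rfl
  have hPhiθ : Phi k ρ h (θ ε) = (ε, 0) := hsE ε hεmem.2.2
  have hfstε : (θ ε).1 = ε := congrArg Prod.fst hPhiθ
  have hsnd : (Phi k ρ h (θ ε)).2 = 0 := congrArg Prod.snd hPhiθ
  have hz : ∀ x, (∑ y, (k x y * Real.exp ((φ ε y - φ ε x) / 2) * (ρ x * (1 + ε * h x))
      - k y x * Real.exp ((φ ε x - φ ε y) / 2) * (ρ y * (1 + ε * h y))))
      + (∑ z, φ ε z) * ρ x = 0 := by
    intro x
    have hthis := congrFun hsnd x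
    simp only [Phi, Pi.zero_apply] at hthis
    rw [hfstε] at hthis
    exact hthis
  have hstatV := sum_V_zero k ρ h hρsum ε (φ ε) hz
  refine ⟨φ ε, hstatV, ?_⟩
  set g : ℝ → K → ℝ := fun s => φ s - s • v with hgdef
  have habs : ∀ s ∈ Set.uIcc (0 : ℝ) ε, |s| ≤ |ε| := by
    intro s hs
    rcases Set.mem_uIcc.mp hs with ⟨h1, h2⟩ | ⟨h1, h2⟩ <;>
      (rw [abs_le]; constructor <;> linarith [neg_abs_le ε, le_abs_self ε])
  have hgd : ∀ s ∈ Set.uIcc (0 : ℝ) ε,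
      HasDerivWithinAt g (deriv φ s - v) (Set.uIcc (0 : ℝ) ε) s := by
    intro s hs
    have hsmem := hεball s (habs s hs)
    have hφs : DifferentiableAt ℝ φ s := by
      have hca : ContDiffAt ℝ 1 φ s := hs0.contDiffAt
        (mem_nhds_iff.mpr ⟨interior s0, interior_subset, isOpen_interior, hsmem.2.1⟩)
      exact hca.differentiableAt one_ne_zero
    have h1 : HasDerivAt φ (deriv φ s) s := hφs.hasDerivAt
    have h2 : HasDerivAt (fun tt : ℝ => tt • v) v s := by
      simpa using (hasDerivAt_id s).smul_const v
    exact (h1.sub h2).hasDerivWithinAt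
  have hbound : ∀ s ∈ Set.uIcc (0 : ℝ) ε, ‖deriv φ s - v‖ ≤ (M : ℝ) * |ε| := by
    intro s hs
    have hsmem := hεball s (habs s hs)
    have hd := hlip.dist_le_mul s hsmem.1 0 h0t
    rw [dist_eq_norm, dist_eq_norm, sub_zero, Real.norm_eq_abs] at hd
    calc ‖deriv φ s - v‖ = ‖deriv φ s - deriv φ 0‖ := by rw [← hvdef]
      _ ≤ (M : ℝ) * |s| := hd
      _ ≤ (M : ℝ) * |ε| := by
          have := M.coe_nonneg
          exact mul_le_mul_of_nonneg_left (habs s hs) this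
  have hmvt := Convex.norm_image_sub_le_of_norm_hasDerivWithin_le hgd hbound
    (convex_uIcc (0 : ℝ) ε) Set.left_mem_uIcc Set.right_mem_uIcc
  have hg0 : g 0 = 0 := by
    rw [hgdef]
    simp [hφ0]
  rw [hg0, sub_zero, sub_zero, Real.norm_eq_abs] at hmvt
  intro x
  have hx1 : |φ ε x - ε * v x| = ‖g ε x‖ := by
    rw [hgdef]
    simp [Real.norm_eq_abs]
  have hx2 : ‖g ε x‖ ≤ ‖g ε‖ := norm_le_pi_norm (g ε) x
  have hfin : (M : ℝ) * |ε| * |ε| = (M : ℝ) * ε ^ 2 := by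
    rw [mul_assoc, abs_mul_abs_self, ← pow_two]
  rw [hx1]
  calc ‖g ε x‖ ≤ ‖g ε‖ := hx2
    _ ≤ (M : ℝ) * |ε| * |ε| := hmvt
    _ = (M : ℝ) * ε ^ 2 := hfin

end core

theorem linearized_potential_equation {K : Type*} [Fintype K]
    (k : K → K → ℝ) (hk : ∀ x y, 0 ≤ k x y)
    (hirr : ∀ x y : K, x ≠ y → Relation.TransGen (fun a b => 0 < k a b) x y)
    (ρ : K → ℝ) (hρpos : ∀ x, 0 < ρ x) (hρsum : ∑ x, ρ x = 1)
    (hstat : ∀ x, ∑ y, (ρ x * k x y - ρ y * k y x) = 0)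
    (h : K → ℝ) (hmean : ∑ x, ρ x * h x = 0) :
    ∃ v : K → ℝ,
      (∀ x, (gen k v x + genStar k ρ v x) / 2 = genStar k ρ h x) ∧
      (∀ v₁ v₂ : K → ℝ,
        (∀ x, (gen k v₁ x + genStar k ρ v₁ x) / 2 = genStar k ρ h x) →
        (∀ x, (gen k v₂ x + genStar k ρ v₂ x) / 2 = genStar k ρ h x) →
        ∃ c : ℝ, ∀ x, v₁ x = v₂ x + c) ∧
      ∃ C : ℝ, ∃ δ > (0 : ℝ), ∀ ε : ℝ, |ε| < δ →
        ∃ V : K → ℝ,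
          (∀ x, ∑ y, (k x y * Real.exp ((V y - V x) / 2) * (ρ x * (1 + ε * h x))
              - k y x * Real.exp ((V x - V y) / 2) * (ρ y * (1 + ε * h y))) = 0) ∧
          ∀ x, |V x - ε * v x| ≤ C * ε ^ 2 := by
  rcases isEmpty_or_nonempty K with hE | hN
  · exact ⟨0, fun x => (hE.false x).elim,
      fun v₁ v₂ _ _ => ⟨0, fun x => (hE.false x).elim⟩,
      0, 1, one_pos, fun ε _ => ⟨0, fun x => (hE.false x).elim, fun x => (hE.false x).elim⟩⟩
  · obtain ⟨v, hv1, hv3⟩ := main_core k hk hirr ρ hρpos hρsum hstat h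
    exact ⟨v, hv1, fun v₁ v₂ h1 h2 => uniqueness k ρ hk hirr hρpos h v₁ v₂ h1 h2, hv3⟩
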